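/- Let z ∈ ℂ, let V₁,…,V_n be W×W complex Hermitian matrices and T₁,…,T_{n−1} be W×W complex matrices, and let H be the nW×nW block-tridiagonal matrix with diagonal blocks V_j, subdiagonal blocks −T_j and superdiagonal blocks −T_j*. Define Γ₁ := V₁ − z·1 and Γ_j := V_j − z·1 − T_{j−1}·Γ_{j−1}^{−1}·T_{j−1}* for j = 2,…,n. If Γ₁,…,Γ_n are all invertible, then H − z·1 is invertible and the W×W block in position (1,n) of (H − z·1)^{−1} equals Γ₁^{−1}·T₁*·Γ₂^{−1}·T₂*·⋯·Γ_{n−1}^{−1}·T_{n−1}*·Γ_n^{−1}. -/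

import Mathlib

open Matrix

noncomputable section

namespace RBM

abbrev Mat (W : ℕ) := Matrix (Fin W) (Fin W) ℂ

/-- The block tridiagonal Hamiltonian with diagonal blocks `V_j`,
subdiagonal blocks `-T_j` and superdiagonal blocks `-T_j*`, acting on
`ℂ^(n·W)` whose coordinates are indexed by pairs (block, inner index). -/
def ham (n W : ℕ) (V T : ℕ → Mat W) : Matrix (Fin n × Fin W) (Fin n × Fin W) ℂ :=
  Matrix.of fun p q =>
    if (p.1 : ℕ) = (q.1 : ℕ) then V (p.1 : ℕ) p.2 q.2
    else if (p.1 : ℕ) = (q.1 : ℕ) + 1 then (-T (q.1 : ℕ)) p.2 q.2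
    else if (q.1 : ℕ) = (p.1 : ℕ) + 1 then (-(T (p.1 : ℕ))ᴴ) p.2 q.2
    else 0

/-- `Γ₁ = V₁ - z`, `Γ_{j+1} = V_{j+1} - z - T_j Γ_j⁻¹ T_j*` (0-indexed). -/
def gammaSeq (W : ℕ) (z : ℂ) (V T : ℕ → Mat W) : ℕ → Mat W
  | 0 => V 0 - z • 1
  | (j + 1) => V (j + 1) - z • 1 - T j * (gammaSeq W z V T j)⁻¹ * (T j)ᴴ

def splitLast (n W : ℕ) : (Fin (n+1) × Fin W) ⊕ Fin W ≃ Fin (n+2) × Fin W where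
  toFun x := Sum.elim (fun p => (p.1.castSucc, p.2)) (fun a => (Fin.last (n+1), a)) x
  invFun p := if h : (p.1 : ℕ) < n + 1 then Sum.inl (⟨p.1, h⟩, p.2) else Sum.inr p.2
  left_inv := by
    rintro (⟨i, a⟩ | a) <;> simp [Fin.last] <;> exact dif_pos (Fin.is_lt _)
  right_inv := by
    rintro ⟨i, a⟩
    by_cases h : (i : ℕ) < n + 1 <;> simp [h, Fin.ext_iff, Fin.last]
    omega

def oneEquiv (W : ℕ) : Fin 1 × Fin W ≃ Fin W where
  toFun p := p.2
  invFun a := ((0 : Fin 1), a)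
  left_inv p := by ext <;> simp [Subsingleton.elim p.1 0]
  right_inv a := rfl

lemma ham_decomp (n W : ℕ) (z : ℂ) (V T : ℕ → Mat W) :
    (ham (n+2) W V T - z • 1).submatrix (splitLast n W) (splitLast n W) =
      fromBlocks (ham (n+1) W V T - z • 1)
        (Matrix.of fun p b => if p.1 = Fin.last n then (-(T n)ᴴ) p.2 b else 0)
        (Matrix.of fun a q => if q.1 = Fin.last n then (-(T n)) a q.2 else 0)
        (V (n+1) - z • 1) := by
  ext x y
  have hsimp := 0
  rcases x with (⟨i, a⟩ | a) <;> rcases y with (⟨j, b⟩ | b)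
  · simp only [submatrix_apply, splitLast, Equiv.coe_fn_mk, Sum.elim_inl,
      fromBlocks_apply₁₁, ham, of_apply, Matrix.sub_apply, Matrix.smul_apply, Matrix.one_apply,
      Prod.mk.injEq, Fin.ext_iff, Fin.coe_castSucc, smul_eq_mul]
  · simp only [submatrix_apply, splitLast, Equiv.coe_fn_mk, Sum.elim_inl, Sum.elim_inr,
      fromBlocks_apply₁₂, ham, of_apply, Matrix.sub_apply, Matrix.smul_apply, Matrix.one_apply,
      Prod.mk.injEq, Fin.ext_iff, Fin.coe_castSucc, Fin.val_last, smul_eq_mul, Fin.last]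
    have hi : (i : ℕ) < n + 1 := i.is_lt
    have h1 : ¬ ((i : ℕ) = n + 1) := by omega
    have h2 : ¬ ((i : ℕ) = n + 1 + 1) := by omega
    rcases eq_or_ne (i : ℕ) n with h | h
    · simp [h, show ¬ ((n:ℕ) = n + 1 + 1) by omega]
    · have h3 : ¬ (n + 1 = (i : ℕ) + 1) := by omega
      simp [h, h1, h2, h3, Ne.symm h]
  · simp only [submatrix_apply, splitLast, Equiv.coe_fn_mk, Sum.elim_inl, Sum.elim_inr,
      fromBlocks_apply₂₁, ham, of_apply, Matrix.sub_apply, Matrix.smul_apply, Matrix.one_apply,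
      Prod.mk.injEq, Fin.ext_iff, Fin.coe_castSucc, Fin.val_last, smul_eq_mul, Fin.last]
    have hj : (j : ℕ) < n + 1 := j.is_lt
    have h1 : ¬ ((n + 1 : ℕ) = (j : ℕ)) := by omega
    rcases eq_or_ne (j : ℕ) n with h | h
    · simp [h, h1]
    · have h2 : ¬ ((n + 1 : ℕ) = (j : ℕ) + 1) := by omega
      have h3 : ¬ ((j : ℕ) = n + 1 + 1) := by omega
      simp [h1, h2, h3, h, Ne.symm h]
  · simp only [submatrix_apply, splitLast, Equiv.coe_fn_mk, Sum.elim_inr,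
      fromBlocks_apply₂₂, ham, of_apply, Matrix.sub_apply, Matrix.smul_apply, Matrix.one_apply,
      Prod.mk.injEq, Fin.ext_iff, Fin.val_last, smul_eq_mul, Fin.last]
    simp

lemma schur_inv {l m : Type*} [Fintype l] [Fintype m] [DecidableEq l] [DecidableEq m]
    (A : Matrix l l ℂ) (B : Matrix l m ℂ) (C : Matrix m l ℂ) (D : Matrix m m ℂ)
    (hA : IsUnit A) (hS : IsUnit (D - C * A⁻¹ * B)) :
    IsUnit (fromBlocks A B C D) ∧
    (fromBlocks A B C D)⁻¹ =
      fromBlocks (A⁻¹ + A⁻¹ * B * (D - C * A⁻¹ * B)⁻¹ * C * A⁻¹)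
        (-(A⁻¹ * B * (D - C * A⁻¹ * B)⁻¹)) (-((D - C * A⁻¹ * B)⁻¹ * C * A⁻¹))
        (D - C * A⁻¹ * B)⁻¹ := by
  cases hA.nonempty_invertible
  have hinv : A⁻¹ = ⅟A := (invOf_eq_nonsing_inv A).symm
  rw [hinv] at hS ⊢
  cases hS.nonempty_invertible
  letI := fromBlocks₁₁Invertible A B C D
  refine ⟨isUnit_of_invertible _, ?_⟩
  rw [← invOf_eq_nonsing_inv, invOf_fromBlocks₁₁_eq, ← invOf_eq_nonsing_inv]

lemma key (W : ℕ) (z : ℂ) (V T : ℕ → Mat W) :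
    ∀ n : ℕ, (∀ j < n + 1, IsUnit (gammaSeq W z V T j)) →
    IsUnit (ham (n+1) W V T - z • 1) ∧
    (∀ a b : Fin W, (ham (n+1) W V T - z • 1)⁻¹ (Fin.last n, a) (Fin.last n, b) =
      (gammaSeq W z V T n)⁻¹ a b) ∧
    (∀ a b : Fin W, (ham (n+1) W V T - z • 1)⁻¹ (0, a) (Fin.last n, b) =
      (((List.range n).map (fun j => (gammaSeq W z V T j)⁻¹ * (T j)ᴴ)).prod *
        (gammaSeq W z V T n)⁻¹) a b) := by
  intro n
  induction n with
  | zero =>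
    intro hΓ
    have hrep : ham 1 W V T - z • 1 = (gammaSeq W z V T 0).submatrix (oneEquiv W) (oneEquiv W) := by
      ext p q
      have h1 : p.1 = q.1 := Subsingleton.elim _ _
      have h0 : (p.1 : ℕ) = 0 := by omega
      simp [ham, gammaSeq, oneEquiv, Matrix.sub_apply, Matrix.smul_apply, Matrix.one_apply,
        Prod.ext_iff, h1, h0, Subsingleton.elim p.1 q.1]
    have hu : IsUnit (ham 1 W V T - z • 1) := by
      rw [hrep]; exact (isUnit_submatrix_equiv _ _).mpr (hΓ 0 (by omega))
    have hi : (ham 1 W V T - z • 1)⁻¹ = (gammaSeq W z V T 0)⁻¹.submatrix (oneEquiv W) (oneEquiv W) := by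
      rw [hrep, Matrix.inv_submatrix_equiv]
    refine ⟨hu, ?_, ?_⟩ <;> intro a b <;> rw [hi] <;>
      simp [oneEquiv, Matrix.submatrix_apply]
  | succ n IH =>
    intro hΓ
    obtain ⟨hAunit, hcorner, htop⟩ := IH (fun j hj => hΓ j (by omega))
    set Γn := gammaSeq W z V T n with hΓn
    set Γs := gammaSeq W z V T (n+1) with hΓs
    set A := ham (n+1) W V T - z • 1 with hA
    set B : Matrix (Fin (n+1) × Fin W) (Fin W) ℂ :=
      Matrix.of fun p b => if p.1 = Fin.last n then (-(T n)ᴴ) p.2 b else 0 with hB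
    set C : Matrix (Fin W) (Fin (n+1) × Fin W) ℂ :=
      Matrix.of fun a q => if q.1 = Fin.last n then (-(T n)) a q.2 else 0 with hC
    set D := V (n+1) - z • 1 with hD
    set e := splitLast n W with he
    -- A⁻¹ * B rows
    have hAB : ∀ (p : Fin (n+1) × Fin W) (b' : Fin W),
        (A⁻¹ * B) p b' = ∑ c, A⁻¹ p (Fin.last n, c) * (-(T n)ᴴ) c b' := by
      intro p b'
      rw [Matrix.mul_apply, Fintype.sum_prod_type]
      simp only [hB, Matrix.of_apply, mul_ite, mul_zero]
      rw [Finset.sum_comm]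
      simp [Finset.sum_ite_eq', Finset.mem_univ]
    have hrow2 : ∀ (y b' : Fin W),
        (A⁻¹ * B) (Fin.last n, y) b' = (Γn⁻¹ * (-(T n)ᴴ)) y b' := by
      intro y b'
      rw [hAB, Matrix.mul_apply]
      simp only [hcorner]
    -- Schur complement computation
    have hCAB : D - C * A⁻¹ * B = Γs := by
      have hkey : C * A⁻¹ * B = T n * Γn⁻¹ * (T n)ᴴ := by
        ext a b
        rw [Matrix.mul_assoc, Matrix.mul_apply, Fintype.sum_prod_type]
        simp only [hC, Matrix.of_apply, ite_mul, zero_mul]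
        rw [Finset.sum_comm]
        simp only [Finset.sum_ite_eq', Finset.mem_univ, if_true]
        simp only [hrow2]
        rw [← Matrix.mul_apply]
        have : (-T n) * (Γn⁻¹ * (-(T n)ᴴ)) = T n * Γn⁻¹ * (T n)ᴴ := by
          simp [Matrix.neg_mul, Matrix.mul_neg, Matrix.mul_assoc]
        rw [this]
      rw [hkey, hΓs, hD, hΓn]
      simp [gammaSeq]
    have hSunit : IsUnit (D - C * A⁻¹ * B) := hCAB ▸ hΓ (n+1) (by omega)
    obtain ⟨hU, hInv⟩ := schur_inv A B C D hAunit hSunit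
    have hham : ham (n+2) W V T - z • 1 =
        (fromBlocks A B C D).submatrix e.symm e.symm := by
      rw [← ham_decomp n W z V T]
      rw [Matrix.submatrix_submatrix]
      simp [he]
    have hU2 : IsUnit (ham (n+2) W V T - z • 1) := by
      rw [hham]; exact (isUnit_submatrix_equiv _ _).mpr hU
    have hinv2 : (ham (n+2) W V T - z • 1)⁻¹ = (fromBlocks A B C D)⁻¹.submatrix e.symm e.symm := by
      rw [hham, Matrix.inv_submatrix_equiv]
    have hesymm_last : ∀ a : Fin W, e.symm (Fin.last (n+1), a) = Sum.inr a := by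
      intro a; simp [he, splitLast, Equiv.symm, Fin.last]
    have hesymm_zero : ∀ a : Fin W, e.symm ((0 : Fin (n+2)), a) = Sum.inl ((0 : Fin (n+1)), a) := by
      intro a; simp [he, splitLast, Equiv.symm, Fin.ext_iff]
    rw [hCAB] at hInv
    refine ⟨hU2, ?_, ?_⟩
    · intro a b
      rw [hinv2, Matrix.submatrix_apply, hesymm_last, hesymm_last, hInv]
      rfl
    · intro a b
      rw [hinv2, Matrix.submatrix_apply, hesymm_zero, hesymm_last, hInv]
      show (-(A⁻¹ * B * Γs⁻¹)) ((0 : Fin (n+1)), a) b = _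
      set Q := (List.map (fun j => (gammaSeq W z V T j)⁻¹ * (T j)ᴴ) (List.range n)).prod * Γn⁻¹
        with hQ
      have hrow0 : ∀ b' : Fin W, (A⁻¹ * B) ((0 : Fin (n+1)), a) b' = (Q * (-(T n)ᴴ)) a b' := by
        intro b'
        rw [hAB, Matrix.mul_apply]
        simp only [htop]
      have lhs_eq : (-(A⁻¹ * B * Γs⁻¹)) ((0 : Fin (n+1)), a) b = (Q * (T n)ᴴ * Γs⁻¹) a b := by
        rw [Matrix.neg_apply, Matrix.mul_apply]
        simp only [hrow0]
        rw [← Matrix.mul_apply, ← Matrix.neg_apply (Q * -(T n)ᴴ * Γs⁻¹)]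
        congr 1
        simp [Matrix.mul_neg, Matrix.neg_mul]
      rw [lhs_eq]
      congr 1
      rw [List.range_succ, List.map_append, List.prod_append, List.map_singleton,
        List.prod_singleton, hQ, hΓn]
      noncomm_ring


theorem green_function_factorization (n W : ℕ) (hn : 0 < n) (z : ℂ) (V T : ℕ → Mat W)
    (hV : ∀ j < n, (V j).IsHermitian)
    (hΓ : ∀ j < n, IsUnit (gammaSeq W z V T j)) :
    IsUnit (ham n W V T - z • 1) ∧
    ∀ a b : Fin W,
      (ham n W V T - z • 1)⁻¹ (⟨0, hn⟩, a) (⟨n - 1, by omega⟩, b) =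
        (((List.range (n - 1)).map
            (fun j => (gammaSeq W z V T j)⁻¹ * (T j)ᴴ)).prod *
          (gammaSeq W z V T (n - 1))⁻¹) a b := by
  obtain ⟨m, rfl⟩ : ∃ m, n = m + 1 := ⟨n - 1, by omega⟩
  obtain ⟨h1, h2, h3⟩ := key W z V T m hΓ
  refine ⟨h1, fun a b => ?_⟩
  have h := h3 a b
  have e1 : (⟨0, hn⟩ : Fin (m + 1)) = 0 := by ext; simp
  have e2 : (⟨m + 1 - 1, by omega⟩ : Fin (m + 1)) = Fin.last m := by ext; simp
  rw [e1, e2, h]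
  simp

end RBM
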